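/- (van der Corput lemma for ℤ^r) Let (u_n)_{n∈ℤ^r} be a bounded family in a Hilbert space H, let (I_N) be a Følner sequence in ℤ^r and (a_N) a sequence in ℤ^r. If lim sup_{M→∞} lim sup_{N→∞} |(1/M^{2r}) Σ_{m_1,m_2 ∈ {1,...,M}^r} (1/|I_N|) Σ_{n ∈ I_N + a_N} ⟨u_{n+m_1}, u_{n+m_2}⟩| = 0, then (1/|I_N|) Σ_{n ∈ I_N + a_N} u_n → 0 in the norm of H. -/

import Mathlib

open MeasureTheory Filter Finset
open scoped symmDiff ENNReal RealInnerProductSpace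

/-- The van der Corput lemma for `ℤ^r`: if `(u n)` is a bounded family in a Hilbert
space, `(I N)` a Følner sequence in `ℤ^r` and `(a N)` base points, and the iterated
limsup of the averaged inner products
`(1/M^{2r}) ∑_{m₁,m₂ ∈ {1,…,M}^r} (1/|I N|) ∑_{n ∈ I N + a N} ⟪u (n+m₁), u (n+m₂)⟫`
vanishes, then `(1/|I N|) ∑_{n ∈ I N + a N} u n → 0` in norm. -/
theorem van_der_corput_zr
    {H : Type*} [NormedAddCommGroup H] [InnerProductSpace ℝ H] [CompleteSpace H]
    (r : ℕ) (u : (Fin r → ℤ) → H)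
    (C : ℝ) (hu : ∀ n, ‖u n‖ ≤ C)
    (I : ℕ → Finset (Fin r → ℤ)) (hI : ∀ N, (I N).Nonempty)
    (hF : ∀ g : Fin r → ℤ, Tendsto
      (fun N => ((((I N).image (· + g)) ∆ (I N)).card : ℝ) / ((I N).card : ℝ))
      atTop (nhds 0))
    (a : ℕ → Fin r → ℤ)
    (hvdc : Filter.limsup (fun M : ℕ =>
        Filter.limsup (fun N =>
          |((M : ℝ) ^ (2 * r))⁻¹ *
            ∑ m₁ ∈ Fintype.piFinset (fun _ : Fin r => Finset.Icc (1:ℤ) M),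
              ∑ m₂ ∈ Fintype.piFinset (fun _ : Fin r => Finset.Icc (1:ℤ) M),
                ((I N).card : ℝ)⁻¹ * ∑ n ∈ I N, ⟪u (n + a N + m₁), u (n + a N + m₂)⟫|)
          atTop) atTop = 0) :
    Tendsto (fun N => ‖((I N).card : ℝ)⁻¹ • ∑ n ∈ I N, u (n + a N)‖) atTop (nhds 0) := by
  classical
  set C' : ℝ := max C 0 with hC'def
  have hC'0 : (0:ℝ) ≤ C' := le_max_right _ _
  have hu' : ∀ n, ‖u n‖ ≤ C' := fun n => (hu n).trans (le_max_left _ _)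
  have hIcard : ∀ N, (0:ℝ) < ((I N).card : ℝ) := fun N => by
    exact_mod_cast (hI N).card_pos
  set P : ℕ → Finset (Fin r → ℤ) :=
    fun M => Fintype.piFinset (fun _ : Fin r => Finset.Icc (1:ℤ) (M:ℤ)) with hPdef
  have hcardP : ∀ M : ℕ, ((P M).card : ℝ) = (M:ℝ) ^ r := by
    intro M
    have h1 : (Finset.Icc (1:ℤ) (M:ℤ)).card = M := by
      rw [Int.card_Icc]; omega
    simp [hPdef, Fintype.card_piFinset, h1]
  -- the averages
  set S : ℕ → H := fun N => ((I N).card : ℝ)⁻¹ • ∑ n ∈ I N, u (n + a N) with hSdef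
  set Av : (Fin r → ℤ) → ℕ → H :=
    fun g N => ((I N).card : ℝ)⁻¹ • ∑ n ∈ I N, u (n + a N + g) with hAvdef
  set Q : ℕ → ℕ → H := fun M N => ((M:ℝ) ^ r)⁻¹ • ∑ m ∈ P M, Av m N with hQdef
  -- Følner: shifted averages are close to S
  have key1 : ∀ g : Fin r → ℤ, Tendsto (fun N => ‖S N - Av g N‖) atTop (nhds 0) := by
    intro g
    have hb : ∀ N, ‖S N - Av g N‖ ≤
        C' * (((((I N).image (· + g)) ∆ (I N)).card : ℝ) / ((I N).card : ℝ)) := by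
      intro N
      have himg : ∑ n ∈ (I N).image (· + g), u (n + a N)
          = ∑ n ∈ I N, u (n + a N + g) := by
        rw [Finset.sum_image (fun x _ y _ h => add_left_injective g h)]
        exact Finset.sum_congr rfl fun n _ => by rw [add_right_comm]
      have hdiff : S N - Av g N = ((I N).card : ℝ)⁻¹ •
          ((∑ n ∈ (I N) \ ((I N).image (· + g)), u (n + a N))
            - ∑ n ∈ ((I N).image (· + g)) \ (I N), u (n + a N)) := by
        rw [Finset.sum_sdiff_sub_sum_sdiff, himg, hSdef, hAvdef, smul_sub]
      have hcs : (((((I N).image (· + g)) ∆ (I N)).card : ℝ))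
          = (((I N).image (· + g) \ (I N)).card : ℝ) + (((I N) \ (I N).image (· + g)).card : ℝ) := by
        rw [symmDiff_def, Finset.sup_eq_union,
          Finset.card_union_of_disjoint (disjoint_sdiff_sdiff)]
        push_cast; ring
      rw [hdiff, norm_smul]
      have h1 : ‖(∑ n ∈ (I N) \ ((I N).image (· + g)), u (n + a N))
            - ∑ n ∈ ((I N).image (· + g)) \ (I N), u (n + a N)‖
          ≤ C' * ((((I N).image (· + g)) ∆ (I N)).card : ℝ) := by
        calc ‖(∑ n ∈ (I N) \ ((I N).image (· + g)), u (n + a N))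
            - ∑ n ∈ ((I N).image (· + g)) \ (I N), u (n + a N)‖
            ≤ ‖∑ n ∈ (I N) \ ((I N).image (· + g)), u (n + a N)‖
              + ‖∑ n ∈ ((I N).image (· + g)) \ (I N), u (n + a N)‖ := norm_sub_le _ _
          _ ≤ (∑ n ∈ (I N) \ ((I N).image (· + g)), C')
              + ∑ n ∈ ((I N).image (· + g)) \ (I N), C' := by
              gcongr
              · exact (norm_sum_le _ _).trans (Finset.sum_le_sum fun n _ => hu' _)
              · exact (norm_sum_le _ _).trans (Finset.sum_le_sum fun n _ => hu' _)
          _ = C' * ((((I N).image (· + g)) ∆ (I N)).card : ℝ) := by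
              rw [hcs]; simp [Finset.sum_const, nsmul_eq_mul]; ring
      have hin : ‖(((I N).card : ℝ))⁻¹‖ = (((I N).card : ℝ))⁻¹ := by
        rw [Real.norm_eq_abs, abs_of_nonneg (inv_nonneg.2 (hIcard N).le)]
      rw [hin]
      rw [div_eq_mul_inv]
      calc (((I N).card : ℝ))⁻¹ * ‖_‖ ≤ (((I N).card : ℝ))⁻¹ *
          (C' * ((((I N).image (· + g)) ∆ (I N)).card : ℝ)) := by
            exact mul_le_mul_of_nonneg_left h1 (inv_nonneg.2 (hIcard N).le)
        _ = C' * (((((I N).image (· + g)) ∆ (I N)).card : ℝ) * (((I N).card : ℝ))⁻¹) := by ring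
    have htend : Tendsto (fun N => C' *
        (((((I N).image (· + g)) ∆ (I N)).card : ℝ) / ((I N).card : ℝ))) atTop (nhds 0) := by
      have := (hF g).const_mul C'
      simpa using this
    exact squeeze_zero (fun N => norm_nonneg _) hb htend
  -- averaged over m: S is close to Q M for M ≥ 1
  have key2 : ∀ M : ℕ, 1 ≤ M → Tendsto (fun N => ‖S N - Q M N‖) atTop (nhds 0) := by
    intro M hM
    have hM1 : (1:ℝ) ≤ (M:ℝ) := by exact_mod_cast hM
    have hMpos : (0:ℝ) < (M:ℝ) ^ r := by positivity
    have hrw : ∀ N, S N - Q M N = ((M:ℝ) ^ r)⁻¹ • ∑ m ∈ P M, (S N - Av m N) := by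
      intro N
      rw [Finset.sum_sub_distrib, smul_sub, hQdef]
      congr 1
      rw [Finset.sum_const]
      rw [← Nat.cast_smul_eq_nsmul ℝ, smul_smul, hcardP M, inv_mul_cancel₀ hMpos.ne', one_smul]
    have hb : ∀ N, ‖S N - Q M N‖ ≤ ((M:ℝ) ^ r)⁻¹ * ∑ m ∈ P M, ‖S N - Av m N‖ := by
      intro N
      rw [hrw N, norm_smul, Real.norm_eq_abs, abs_of_nonneg (inv_nonneg.2 hMpos.le)]
      exact mul_le_mul_of_nonneg_left (norm_sum_le _ _) (inv_nonneg.2 hMpos.le)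
    have htend : Tendsto (fun N => ((M:ℝ) ^ r)⁻¹ * ∑ m ∈ P M, ‖S N - Av m N‖)
        atTop (nhds 0) := by
      have h := (tendsto_finset_sum (P M) (fun m _ => key1 m)).const_mul (((M:ℝ) ^ r)⁻¹)
      simpa using h
    exact squeeze_zero (fun N => norm_nonneg _) hb htend
  -- the inner-product expression
  set e : ℕ → ℕ → ℝ := fun M N =>
    ((M : ℝ) ^ (2 * r))⁻¹ *
      ∑ m₁ ∈ P M, ∑ m₂ ∈ P M,
        ((I N).card : ℝ)⁻¹ * ∑ n ∈ I N, ⟪u (n + a N + m₁), u (n + a N + m₂)⟫ with hedef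
  have hpow : ∀ M : ℕ, ((M:ℝ)) ^ (2 * r) = (M:ℝ) ^ r * (M:ℝ) ^ r := by
    intro M; rw [two_mul, pow_add]
  -- key3 : the square of the norm of Q is bounded by e
  have key3 : ∀ M N, ‖Q M N‖ ^ 2 ≤ e M N := by
    intro M N
    set c : ℝ := ((I N).card : ℝ)⁻¹ with hcdef
    set d : ℝ := ((M:ℝ) ^ r)⁻¹ with hddef
    have hc0 : 0 ≤ c := inv_nonneg.2 (hIcard N).le
    have hd0 : 0 ≤ d := by positivity
    set w : (Fin r → ℤ) → H := fun n => d • ∑ m ∈ P M, u (n + a N + m) with hwdef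
    have stepa : Q M N = c • ∑ n ∈ I N, w n := by
      rw [hQdef]
      simp only [hAvdef, hwdef, Finset.smul_sum, smul_smul]
      rw [Finset.sum_comm]
      simp [mul_comm]
      rfl
    have stepc : ∀ n, ‖w n‖ ^ 2 = (d * d) *
        ∑ m₁ ∈ P M, ∑ m₂ ∈ P M, ⟪u (n + a N + m₁), u (n + a N + m₂)⟫ := by
      intro n
      rw [← real_inner_self_eq_norm_sq, hwdef]
      simp only [real_inner_smul_left, real_inner_smul_right, sum_inner, inner_sum,
        Finset.mul_sum]
      refine Finset.sum_congr rfl fun m₁ _ => Finset.sum_congr rfl fun m₂ _ => ?_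
      rw [real_inner_comm]
      ring
    have stepb : ‖Q M N‖ ^ 2 ≤ c * ∑ n ∈ I N, ‖w n‖ ^ 2 := by
      rw [stepa, norm_smul, Real.norm_eq_abs, abs_of_nonneg hc0, mul_pow]
      have h1 : ‖∑ n ∈ I N, w n‖ ^ 2 ≤ (∑ n ∈ I N, ‖w n‖) ^ 2 :=
        pow_le_pow_left₀ (norm_nonneg _) (norm_sum_le _ _) 2
      have h2 : (∑ n ∈ I N, ‖w n‖) ^ 2 ≤ ((I N).card : ℝ) * ∑ n ∈ I N, ‖w n‖ ^ 2 := by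
        exact sq_sum_le_card_mul_sum_sq
      have h3 : c ^ 2 * ((I N).card : ℝ) = c := by
        rw [hcdef, sq, mul_assoc, inv_mul_cancel₀ (hIcard N).ne', mul_one]
      calc c ^ 2 * ‖∑ n ∈ I N, w n‖ ^ 2 ≤ c ^ 2 * (((I N).card : ℝ) * ∑ n ∈ I N, ‖w n‖ ^ 2) := by
            exact mul_le_mul_of_nonneg_left (h1.trans h2) (by positivity)
        _ = c * ∑ n ∈ I N, ‖w n‖ ^ 2 := by rw [← mul_assoc, h3]
    have stepd : e M N = c * ∑ n ∈ I N, ‖w n‖ ^ 2 := by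
      have swap : ∀ f : (Fin r → ℤ) → (Fin r → ℤ) → (Fin r → ℤ) → ℝ,
          ∑ m₁ ∈ P M, ∑ m₂ ∈ P M, ∑ n ∈ I N, f m₁ m₂ n
            = ∑ n ∈ I N, ∑ m₁ ∈ P M, ∑ m₂ ∈ P M, f m₁ m₂ n := by
        intro f
        exact (Finset.sum_congr rfl fun m₁ _ => Finset.sum_comm).trans Finset.sum_comm
      have lhs : e M N = ∑ m₁ ∈ P M, ∑ m₂ ∈ P M, ∑ n ∈ I N,
          (d * d * c) * ⟪u (n + a N + m₁), u (n + a N + m₂)⟫ := by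
        rw [hedef]
        simp only [Finset.mul_sum]
        refine Finset.sum_congr rfl fun m₁ _ => Finset.sum_congr rfl fun m₂ _ => ?_
        refine Finset.sum_congr rfl fun n _ => ?_
        rw [hpow M, hddef, hcdef, mul_inv]
        ring
      have rhs : c * ∑ n ∈ I N, ‖w n‖ ^ 2 = ∑ n ∈ I N, ∑ m₁ ∈ P M, ∑ m₂ ∈ P M,
          (d * d * c) * ⟪u (n + a N + m₁), u (n + a N + m₂)⟫ := by
        rw [Finset.mul_sum]
        refine Finset.sum_congr rfl fun n _ => ?_
        rw [stepc n]
        simp only [Finset.mul_sum]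
        refine Finset.sum_congr rfl fun m₁ _ => Finset.sum_congr rfl fun m₂ _ => ?_
        ring
      rw [lhs, rhs, swap]
    rw [stepd]; exact stepb
  -- uniform bound on |e|
  have key4 : ∀ M N, |e M N| ≤ C' ^ 2 := by
    intro M N
    have hinner : ∀ m₁ m₂ : Fin r → ℤ,
        |((I N).card : ℝ)⁻¹ * ∑ n ∈ I N, ⟪u (n + a N + m₁), u (n + a N + m₂)⟫| ≤ C' ^ 2 := by
      intro m₁ m₂
      rw [abs_mul, abs_of_nonneg (inv_nonneg.2 (hIcard N).le)]
      have h1 : |∑ n ∈ I N, ⟪u (n + a N + m₁), u (n + a N + m₂)⟫|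
          ≤ ∑ n ∈ I N, C' ^ 2 := by
        refine (Finset.abs_sum_le_sum_abs _ _).trans (Finset.sum_le_sum fun n _ => ?_)
        refine (abs_real_inner_le_norm _ _).trans ?_
        rw [sq]
        exact mul_le_mul (hu' _) (hu' _) (norm_nonneg _) hC'0
      rw [Finset.sum_const, nsmul_eq_mul] at h1
      calc ((I N).card : ℝ)⁻¹ * |∑ n ∈ I N, ⟪u (n + a N + m₁), u (n + a N + m₂)⟫|
          ≤ ((I N).card : ℝ)⁻¹ * (((I N).card : ℝ) * C' ^ 2) :=
            mul_le_mul_of_nonneg_left h1 (inv_nonneg.2 (hIcard N).le)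
        _ = C' ^ 2 := by field_simp
    have h2 : |e M N| ≤ ((M : ℝ) ^ (2 * r))⁻¹ * ((M:ℝ) ^ (2 * r) * C' ^ 2) := by
      rw [hedef, abs_mul, abs_of_nonneg (by positivity : (0:ℝ) ≤ ((M : ℝ) ^ (2 * r))⁻¹)]
      refine mul_le_mul_of_nonneg_left ?_ (by positivity)
      calc |∑ m₁ ∈ P M, ∑ m₂ ∈ P M,
              ((I N).card : ℝ)⁻¹ * ∑ n ∈ I N, ⟪u (n + a N + m₁), u (n + a N + m₂)⟫|
          ≤ ∑ m₁ ∈ P M, ∑ m₂ ∈ P M, C' ^ 2 := by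
            refine (Finset.abs_sum_le_sum_abs _ _).trans (Finset.sum_le_sum fun m₁ _ => ?_)
            exact (Finset.abs_sum_le_sum_abs _ _).trans
              (Finset.sum_le_sum fun m₂ _ => hinner m₁ m₂)
        _ = (M:ℝ) ^ (2 * r) * C' ^ 2 := by
            rw [Finset.sum_const, Finset.sum_const, nsmul_eq_mul, nsmul_eq_mul, hcardP M,
              hpow M]
            ring
    refine h2.trans ?_
    rcases eq_or_ne ((M:ℝ) ^ (2 * r)) 0 with h | h
    · rw [h]; simp; positivity
    · rw [← mul_assoc, inv_mul_cancel₀ h, one_mul]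
  -- assemble everything
  have main : Tendsto S atTop (nhds (0:H)) := by
    rw [NormedAddCommGroup.tendsto_nhds_zero]
    intro ε hε
    have hε2 : (0:ℝ) < (ε/2) ^ 2 := by positivity
    -- the outer limsup is < (ε/2)^2
    have hbdd : IsBoundedUnder (· ≤ ·) atTop
        (fun M : ℕ => limsup (fun N => |e M N|) atTop) := by
      refine isBoundedUnder_of ⟨C' ^ 2, fun M => ?_⟩
      exact limsup_le_of_le
        ((isBoundedUnder_of ⟨0, fun N => abs_nonneg _⟩ :
            IsBoundedUnder (· ≥ ·) atTop fun N => |e M N|).isCoboundedUnder_le)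
        (Eventually.of_forall fun N => key4 M N)
    have houter : ∀ᶠ M in atTop, limsup (fun N => |e M N|) atTop < (ε/2) ^ 2 := by
      refine eventually_lt_of_limsup_lt ?_ hbdd
      rw [hvdc]; exact hε2
    obtain ⟨M, hM1, hMlt⟩ : ∃ M : ℕ, 1 ≤ M ∧ limsup (fun N => |e M N|) atTop < (ε/2) ^ 2 := by
      rcases (houter.and (eventually_ge_atTop 1)).exists with ⟨M, h1, h2⟩
      exact ⟨M, h2, h1⟩
    have hNev : ∀ᶠ N in atTop, |e M N| < (ε/2) ^ 2 := by
      refine eventually_lt_of_limsup_lt hMlt ?_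
      exact isBoundedUnder_of ⟨C' ^ 2, fun N => key4 M N⟩
    have hSQ : ∀ᶠ N in atTop, ‖S N - Q M N‖ < ε/2 :=
      (key2 M hM1).eventually_lt_const (by positivity)
    filter_upwards [hNev, hSQ] with N h1 h2
    have hQlt : ‖Q M N‖ < ε/2 := by
      have h3 : ‖Q M N‖ ^ 2 ≤ |e M N| := (key3 M N).trans (le_abs_self _)
      nlinarith [norm_nonneg (Q M N)]
    calc ‖S N‖ ≤ ‖S N - Q M N‖ + ‖Q M N‖ := by
          simpa using norm_add_le (S N - Q M N) (Q M N)
      _ < ε/2 + ε/2 := by exact add_lt_add h2 hQlt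
      _ = ε := by ring
  simpa using main.norm
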